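/- Let ⊢ be a deductive relation on a dually integral Abelian pomonoid R = ⟨R, ≤, +, 0⟩. Define on the set Th^p(⊢) of principal theories the operation Th(x) +⊢ Th(y) = Th(x+y). Then this operation is well defined, and ⟨Th^p(⊢), ⊆, +⊢, Th(0)⟩ is a dually integral Abelian pomonoid, and the map x ↦ Th(x) is a surjective order-preserving monoid homomorphism from R onto it. -/
import Mathlib


/-- The principal theories `Th(x) = {b : x ⊢ b}` of a deductive relation form a dually
integral Abelian pomonoid under `Th(x) + Th(y) = Th(x+y)`, ordered by inclusion with
bottom `Th(0)`, and `x ↦ Th(x)` is a surjective order-preserving monoid morphism. -/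
theorem principal_theories_pomonoid
    {R : Type*} [PartialOrder R] [AddCommMonoid R]
    (hcomp : ∀ a b c : R, a ≤ b → a + c ≤ b + c)
    (hbot : ∀ a : R, (0 : R) ≤ a)
    (vd : R → R → Prop)
    (hrefl : ∀ a b : R, a ≤ b → vd b a)
    (htrans : ∀ a b c : R, vd a b → vd b c → vd a c)
    (hcompat : ∀ a b c : R, vd a b → vd (a + c) (b + c))
    (Th : R → Set R) (hTh : ∀ x : R, Th x = {b : R | vd x b}) :
    -- the operation Th(x) +⊢ Th(y) = Th(x+y) is well defined
    (∀ x y x' y' : R, Th x = Th x' → Th y = Th y' → Th (x + y) = Th (x' + y')) ∧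
    -- Th(0) is the bottom element of ⟨Th^p(⊢), ⊆⟩
    (∀ x : R, Th 0 ⊆ Th x) ∧
    -- +⊢ is compatible with the inclusion order
    (∀ x y z : R, Th x ⊆ Th y → Th (x + z) ⊆ Th (y + z)) ∧
    -- Th is order-preserving (and it is a surjective monoid morphism by definition
    -- of the structure on the image)
    (∀ x y : R, x ≤ y → Th x ⊆ Th y) ∧
    (∀ T ∈ Th '' Set.univ, ∃ x : R, Th x = T) := by
  have hvdrefl : ∀ a : R, vd a a := fun a => hrefl a a le_rfl
  -- Th x ⊆ Th y ↔ vd y x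
  have key : ∀ x y : R, Th x ⊆ Th y ↔ vd y x := by
    intro x y
    rw [hTh, hTh]
    constructor
    · intro h; exact h (hvdrefl x)
    · intro h b hb; exact htrans y x b h hb
  have mono : ∀ x y z : R, Th x ⊆ Th y → Th (x + z) ⊆ Th (y + z) := by
    intro x y z h
    rw [key] at h ⊢
    exact hcompat y x z h
  refine ⟨?_, ?_, mono, ?_, ?_⟩
  · intro x y x' y' hx hy
    apply Set.Subset.antisymm
    · calc Th (x + y) ⊆ Th (x' + y) := mono x x' y hx.le
        _ = Th (y + x') := by rw [add_comm]
        _ ⊆ Th (y' + x') := mono y y' x' hy.le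
        _ = Th (x' + y') := by rw [add_comm]
    · calc Th (x' + y') ⊆ Th (x + y') := mono x' x y' hx.ge
        _ = Th (y' + x) := by rw [add_comm]
        _ ⊆ Th (y + x) := mono y' y x hy.ge
        _ = Th (x + y) := by rw [add_comm]
  · intro x
    rw [key]
    exact hrefl 0 x (hbot x)
  · intro x y h
    rw [key]
    exact hrefl x y h
  · rintro T ⟨x, -, rfl⟩
    exact ⟨x, rfl⟩
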